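/- arXiv:1604.05915 — 3 statements merged into one kernel-verified Lean document; each statement's English description precedes it below -/
import Mathlib

section
/- A graph G is simply connected (every loop is contractible via elementary homotopies) if and only if every simple cycle of G is contractible. -/
/-- A loop based at `v₀`: a nonempty sequence of vertices starting and ending at `v₀`
in which consecutive vertices are equal or adjacent. -/
def IsLoopAt {V : Type*} (G : SimpleGraph V) (v₀ : V) (l : List V) : Prop :=
  l.head? = some v₀ ∧ l.getLast? = some v₀ ∧
    l.Chain' (fun a b => a = b ∨ G.Adj a b)

/-- One (length-decreasing) elementary homotopy move between sequences of vertices: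
contracting a repeated vertex, removing a backtrack, or pushing across a 2-cell
(a triangle). -/
def ElemHomotopy {V : Type*} (G : SimpleGraph V) : List V → List V → Prop :=
  fun l l' =>
    (∃ (p : List V) (a : V) (s : List V),
        l = p ++ [a, a] ++ s ∧ l' = p ++ [a] ++ s) ∨
    (∃ (p : List V) (a b : V) (s : List V),
        l = p ++ [a, b, a] ++ s ∧ l' = p ++ [a] ++ s) ∨
    (∃ (p : List V) (a b c : V) (s : List V), G.Adj a c ∧
        l = p ++ [a, b, c] ++ s ∧ l' = p ++ [a, c] ++ s)

/-- Homotopy of vertex sequences: the reflexive-transitive-symmetric closure of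
elementary homotopy moves. -/
def Homotopic {V : Type*} (G : SimpleGraph V) : List V → List V → Prop :=
  Relation.EqvGen (ElemHomotopy G)

section Aux
variable {V : Type*} {G : SimpleGraph V}

lemma elem_congr {l₁ l₂ p s : List V} (h : ElemHomotopy G l₁ l₂) :
    ElemHomotopy G (p ++ l₁ ++ s) (p ++ l₂ ++ s) := by
  rcases h with ⟨q, a, r, h1, h2⟩ | ⟨q, a, b, r, h1, h2⟩ | ⟨q, a, b, c, r, hadj, h1, h2⟩
  · exact Or.inl ⟨p ++ q, a, r ++ s, by simp [h1, h2]⟩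
  · exact Or.inr (Or.inl ⟨p ++ q, a, b, r ++ s, by simp [h1, h2]⟩)
  · exact Or.inr (Or.inr ⟨p ++ q, a, b, c, r ++ s, hadj, by simp [h1, h2]⟩)

lemma homotopic_congr {l₁ l₂ : List V} (p s : List V) (h : Homotopic G l₁ l₂) :
    Homotopic G (p ++ l₁ ++ s) (p ++ l₂ ++ s) := by
  induction h with
  | rel x y h => exact Relation.EqvGen.rel _ _ (elem_congr h)
  | refl x => exact Relation.EqvGen.refl _
  | symm x y _ ih => exact Relation.EqvGen.symm _ _ ih
  | trans x y z _ _ ih1 ih2 => exact Relation.EqvGen.trans _ _ _ ih1 ih2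

def mkWalk (G : SimpleGraph V) : (a c : V) → (l : List V) → List.Chain G.Adj a l →
    l.getLastD a = c → G.Walk a c
  | _, _, [], _, h => by rw [← h]; exact SimpleGraph.Walk.nil
  | a, c, b :: t, hc, h =>
    SimpleGraph.Walk.cons (List.chain_cons.mp hc).1
      (mkWalk G b c t (List.chain_cons.mp hc).2 (by rwa [List.getLastD_cons] at h))

lemma mkWalk_support (G : SimpleGraph V) : ∀ (a c : V) (l : List V)
    (hc : List.Chain G.Adj a l) (h : l.getLastD a = c),
    (mkWalk G a c l hc h).support = a :: l
  | a, c, [], _, h => by subst h; rfl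
  | a, c, b :: t, hc, h => by
    rw [mkWalk, SimpleGraph.Walk.support_cons]; exact congrArg _ (mkWalk_support _ _ _ _ _ _)

lemma mkWalk_length (G : SimpleGraph V) : ∀ (a c : V) (l : List V)
    (hc : List.Chain G.Adj a l) (h : l.getLastD a = c),
    (mkWalk G a c l hc h).length = l.length
  | a, c, [], _, h => by subst h; rfl
  | a, c, b :: t, hc, h => by
    rw [mkWalk, SimpleGraph.Walk.length_cons]; exact congrArg (· + 1) (mkWalk_length _ _ _ _ _ _)

lemma eq_split_or_chain_adj : ∀ l : List V,
    l.Chain' (fun a b => a = b ∨ G.Adj a b) →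
    (∃ (p : List V) (a : V) (s : List V), l = p ++ [a, a] ++ s) ∨ l.Chain' G.Adj
  | [], _ => Or.inr List.IsChain.nil
  | [_], _ => Or.inr (List.isChain_singleton _)
  | x :: y :: t, h => by
    unfold List.Chain' at h
    rw [List.isChain_cons_cons] at h
    rcases h with ⟨hxy | hxy, ht⟩
    · subst hxy
      exact Or.inl ⟨[], x, t, rfl⟩
    · rcases eq_split_or_chain_adj (y :: t) ht with ⟨p, a, s, hs⟩ | hc
      · exact Or.inl ⟨x :: p, a, s, by simp [hs]⟩
      · exact Or.inr (List.isChain_cons_cons.mpr ⟨hxy, hc⟩)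

lemma not_nodup_split : ∀ l : List V, ¬ l.Nodup →
    ∃ (A : List V) (u : V) (B C : List V), l = A ++ u :: B ++ u :: C
  | [], h => absurd List.nodup_nil h
  | x :: t, h => by
    by_cases hx : x ∈ t
    · obtain ⟨B, C, rfl⟩ := List.append_of_mem hx
      exact ⟨[], x, B, C, rfl⟩
    · have ht : ¬ t.Nodup := fun hn => h (List.nodup_cons.mpr ⟨hx, hn⟩)
      obtain ⟨A, u, B, C, rfl⟩ := not_nodup_split t ht
      exact ⟨x :: A, u, B, C, rfl⟩

lemma isCycle_of (v : V) (c : G.Walk v v) (hn : 3 ≤ c.length)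
    (hnd : c.support.tail.Nodup) : c.IsCycle := by
  cases c with
  | nil => simp at hn
  | @cons _ y _ h p =>
    rw [SimpleGraph.Walk.cons_isCycle_iff]
    have hp : p.IsPath := by
      rw [SimpleGraph.Walk.isPath_def]
      simpa using hnd
    refine ⟨hp, fun hmem => ?_⟩
    have hq : p.reverse.IsPath := hp.reverse
    have hmem' : s(v, y) ∈ p.reverse.edges := by
      rw [SimpleGraph.Walk.edges_reverse, List.mem_reverse]
      exact hmem
    have hlen : 2 ≤ p.reverse.length := by
      rw [SimpleGraph.Walk.length_reverse]
      simp only [SimpleGraph.Walk.length_cons] at hn; omega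
    generalize hq' : p.reverse = q at hq hmem' hlen
    cases q with
    | nil => simp at hlen
    | @cons _ w _ h2 r =>
      rw [SimpleGraph.Walk.cons_isPath_iff] at hq
      rw [SimpleGraph.Walk.edges_cons, List.mem_cons] at hmem'
      rcases hmem' with heq | hmem'
      · rw [Sym2.eq_iff] at heq
        rcases heq with ⟨-, rfl⟩ | ⟨rfl, rfl⟩
        · -- w = y, so r : Walk y y with length ≥ 1
          cases r with
          | nil => simp at hlen
          | @cons _ z _ h3 r' =>
            rw [SimpleGraph.Walk.cons_isPath_iff] at hq
            exact hq.1.2 (r'.end_mem_support)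
        · exact h.ne rfl
      · exact hq.2 (r.fst_mem_support_of_mem_edges hmem')

end Aux

section Key
variable {V : Type*} {G : SimpleGraph V}

lemma dedup_loop {p s : List V} {a v₀ : V}
    (hL : IsLoopAt G v₀ (p ++ [a, a] ++ s)) : IsLoopAt G v₀ (p ++ [a] ++ s) := by
  obtain ⟨h1, h2, h3⟩ := hL
  refine ⟨?_, ?_, ?_⟩
  · cases p <;> simpa using h1
  · cases s with
    | nil => simpa [List.getLast?_concat] using h2
    | cons c C =>
      rw [List.append_assoc, List.getLast?_append_of_ne_nil _ (by simp)] at h2 ⊢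
      exact h2
  · unfold List.Chain' at h3 ⊢
    rw [List.append_assoc, List.isChain_append] at h3 ⊢
    refine ⟨h3.1, ?_, ?_⟩
    · have := h3.2.1
      rw [show ([a, a] ++ s) = a :: (a :: s) by simp] at this
      rw [show ([a] ++ s) = a :: s by simp]
      exact (List.isChain_cons_cons.mp this).2
    · intro x hx y hy
      exact h3.2.2 x hx y (by simpa using hy)

lemma key (hyp : ∀ (v : V) (c : G.Walk v v), c.IsCycle → Homotopic G c.support [v]) :
    ∀ (n : ℕ) (l : List V) (v₀ : V), l.length ≤ n → IsLoopAt G v₀ l →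
      Homotopic G l [v₀] := by
  intro n
  induction n with
  | zero =>
    rintro l v₀ hl ⟨h1, -, -⟩
    rw [Nat.le_zero, List.length_eq_zero_iff] at hl
    subst hl; simp at h1
  | succ n ih =>
    rintro l v₀ hl hL
    obtain ⟨h1, h2, h3⟩ := hL
    rcases eq_split_or_chain_adj l h3 with ⟨p, a, s, rfl⟩ | hadj
    · have step : Homotopic G (p ++ [a, a] ++ s) (p ++ [a] ++ s) :=
        Relation.EqvGen.rel _ _ (Or.inl ⟨p, a, s, rfl, rfl⟩)
      have hlen : (p ++ [a] ++ s).length ≤ n := by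
        simp only [List.length_append, List.length_cons, List.length_nil] at hl ⊢; omega
      exact Relation.EqvGen.trans _ _ _ step
        (ih _ _ hlen (dedup_loop ⟨h1, h2, h3⟩))
    · match l, h1, h2, hadj, hl with
      | [x], h1, h2, hadj, hl =>
        obtain rfl : x = v₀ := by simpa using h1
        exact Relation.EqvGen.refl _
      | [x, y], h1, h2, hadj, hl =>
        obtain rfl : x = v₀ := by simpa using h1
        have hy : y = x := by simpa using h2
        unfold List.Chain' at hadj
        rw [List.isChain_cons_cons, hy] at hadj
        exact absurd hadj.1 G.irrefl
      | [x, y, z], h1, h2, hadj, hl =>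
        obtain rfl : x = v₀ := by simpa using h1
        have hz : z = x := by simpa using h2
        exact Relation.EqvGen.rel _ _
          (Or.inr (Or.inl ⟨[], x, y, [], by simp [hz], rfl⟩))
      | x :: y :: z :: w :: t, h1, h2, hadj, hl =>
        obtain rfl : x = v₀ := by simpa using h1
        set rest : List V := y :: z :: w :: t with hrest
        by_cases hnd : rest.Nodup
        · have hchain : List.Chain G.Adj x rest := hadj
          have h2' : rest.getLast? = some x := by
            rwa [List.getLast?_cons_cons] at h2
          have hlast : rest.getLastD x = x := by
            rw [List.getLastD_eq_getLast?, h2']; rfl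
          have hcyc := isCycle_of x (mkWalk G x x rest hchain hlast) ?_ ?_
          · have := hyp x _ hcyc
            rwa [mkWalk_support] at this
          · rw [mkWalk_length]; simp only [hrest, List.length_cons]; omega
          · rw [mkWalk_support]; simpa using hnd
        · obtain ⟨A, u, B, C, hsplit⟩ := not_nodup_split rest hnd
          set inner : List V := u :: (B ++ [u]) with hinner
          have hInfix : x :: rest = (x :: A) ++ inner ++ C := by
            simp [hsplit, hinner]
          have hlen_l : rest.length = A.length + B.length + C.length + 2 := by
            simp [hsplit]; omega
          have hInnerLoop : IsLoopAt G u inner := by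
            refine ⟨rfl, ?_, ?_⟩
            · show ((u :: B) ++ [u]).getLast? = some u
              rw [List.getLast?_concat]
            · exact h3.infix ⟨x :: A, C, hInfix.symm⟩
          have hInnerLen : inner.length ≤ n := by
            have hl' := hl
            simp only [List.length_cons] at hl'
            rw [hlen_l] at hl'
            simp only [hinner, List.length_cons, List.length_append,
              List.length_singleton, List.length_nil]
            omega
          have hInner := ih inner u hInnerLen hInnerLoop
          have step : Homotopic G (x :: rest) ((x :: A) ++ [u] ++ C) := by
            rw [hInfix]
            exact homotopic_congr (x :: A) C hInner
          rw [hInfix] at h3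
          unfold List.Chain' at h3
          rw [List.append_assoc, List.isChain_append] at h3
          have hOuterLoop : IsLoopAt G x ((x :: A) ++ [u] ++ C) := by
            refine ⟨by simp, ?_, ?_⟩
            · cases C with
              | nil =>
                have hu : u = x := by
                  have h2'' := h2
                  rw [hInfix] at h2''
                  rw [show ((x :: A) ++ inner ++ ([] : List V))
                      = ((x :: A) ++ (u :: B)) ++ [u] by simp [hinner]] at h2''
                  rw [List.getLast?_concat] at h2''
                  exact (Option.some_injective _ h2'')
                rw [show (x :: A) ++ [u] ++ ([] : List V) = (x :: A) ++ [u] by simp,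
                  List.getLast?_concat, hu]
              | cons c C' =>
                have h2'' := h2
                rw [hInfix, List.append_assoc,
                  List.getLast?_append_of_ne_nil _ (by simp),
                  List.getLast?_append_of_ne_nil _ (by simp [hinner])] at h2''
                rw [List.append_assoc, List.getLast?_append_of_ne_nil _ (by simp),
                  List.getLast?_append_of_ne_nil _ (by simp)]
                exact h2''
            · unfold List.Chain'
              rw [List.append_assoc, List.isChain_append]
              refine ⟨h3.1, ?_, ?_⟩
              · exact h3.2.1.infix ⟨u :: B, [], by simp [hinner]⟩
              · intro a ha b hb
                exact h3.2.2 a ha b (by simpa [hinner] using hb)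
          have hOuterLen : ((x :: A) ++ [u] ++ C).length ≤ n := by
            simp only [List.length_cons] at hl
            rw [hlen_l] at hl
            simp only [List.length_append, List.length_cons, List.length_nil]
            omega
          exact Relation.EqvGen.trans _ _ _ step (ih _ _ hOuterLen hOuterLoop)

end Key

/-- A loop is contractible if it can be reduced to a single vertex by a finite
sequence of elementary homotopies. -/
def Contractible {V : Type*} (G : SimpleGraph V) (l : List V) : Prop :=
  ∃ v : V, Homotopic G l [v]

/-- A graph is simply connected if every loop is contractible (to its basepoint). -/
def SimplyConnected {V : Type*} (G : SimpleGraph V) : Prop :=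
  ∀ (v₀ : V) (l : List V), IsLoopAt G v₀ l → Homotopic G l [v₀]

/-- A graph is simply connected iff every simple cycle is contractible. -/
theorem stmt11 {V : Type*} (G : SimpleGraph V) :
    SimplyConnected G ↔
      ∀ (v : V) (c : G.Walk v v), c.IsCycle → Homotopic G c.support [v] := by
  constructor
  · intro h v c _
    refine h v c.support ⟨?_, ?_, ?_⟩
    · rw [c.support_eq_cons]; rfl
    · rw [List.getLast?_eq_getLast (by simp), c.getLast_support]
    · exact c.isChain_adj_support.imp fun _ _ hab => Or.inr hab
  · intro hyp v₀ l hl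
    exact key hyp l.length l v₀ le_rfl hl
end

section
/- In a Weetman graph G with base vertex v₀, every cluster C at level k ≥ 1 has exactly one neighboring cluster at level k−1 (a unique ancestor cluster a(C)), and consequently every path from v₀ to any vertex of C passes through a vertex of a(C). -/
def TriangleCondition {V : Type*} (G : SimpleGraph V) (v₀ : V) : Prop :=
  ∀ v v' : V, G.Adj v v' → G.dist v₀ v = G.dist v₀ v' →
    ∃ u : V, G.Adj u v ∧ G.Adj u v' ∧ G.dist v₀ u = G.dist v₀ v - 1

def predSet {V : Type*} (G : SimpleGraph V) (v₀ v : V) : Set V :=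
  {u : V | G.Adj u v ∧ G.dist v₀ u = G.dist v₀ v - 1}

def IntervalCondition {V : Type*} (G : SimpleGraph V) (v₀ : V) : Prop :=
  ∀ v : V, (G.induce (predSet G v₀ v)).Preconnected

def IsWeetman {V : Type*} (G : SimpleGraph V) : Prop :=
  ∀ v₀ : V, TriangleCondition G v₀ ∧ IntervalCondition G v₀

/-- The sphere of radius `k` around `v₀`. -/
def sphere {V : Type*} (G : SimpleGraph V) (v₀ : V) (k : ℕ) : Set V :=
  {v : V | G.dist v₀ v = k}

/-- A cluster: a connected component of the subgraph induced on some sphere around `v₀`. -/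
def Cluster {V : Type*} (G : SimpleGraph V) (v₀ : V) : Type _ :=
  Σ k : ℕ, (G.induce (sphere G v₀ k)).ConnectedComponent

/-- Membership of a vertex in a cluster. -/
def memCluster {V : Type*} (G : SimpleGraph V) (v₀ : V) (v : V)
    (C : Cluster G v₀) : Prop :=
  ∃ hv : v ∈ sphere G v₀ C.1,
    (G.induce (sphere G v₀ C.1)).connectedComponentMk ⟨v, hv⟩ = C.2

/-- The graph of clusters: clusters are vertices, two distinct clusters being adjacent
whenever they contain adjacent vertices of `G`. -/
def clusterGraph {V : Type*} (G : SimpleGraph V) (v₀ : V) :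
    SimpleGraph (Cluster G v₀) where
  Adj C C' := C ≠ C' ∧ ∃ u w : V, G.Adj u w ∧ memCluster G v₀ u C ∧ memCluster G v₀ w C'
  symm := ⟨by
    rintro C C' ⟨hne, u, w, hadj, hu, hw⟩
    exact ⟨Ne.symm hne, w, u, hadj.symm, hw, hu⟩⟩
  loopless := ⟨by rintro C ⟨hne, -⟩; exact hne rfl⟩

/-- The cluster of a given vertex. -/
noncomputable def clusterOf {V : Type*} (G : SimpleGraph V) (v₀ v : V) : Cluster G v₀ :=
  ⟨G.dist v₀ v, (G.induce (sphere G v₀ (G.dist v₀ v))).connectedComponentMk ⟨v, rfl⟩⟩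

section Aux
variable {V : Type*} {G : SimpleGraph V} {v₀ : V}

lemma mem_clusterOf (v : V) : memCluster G v₀ v (clusterOf G v₀ v) := ⟨rfl, rfl⟩

lemma clusterOf_eq_of_mem {v : V} {C : Cluster G v₀} (h : memCluster G v₀ v C) :
    clusterOf G v₀ v = C := by
  obtain ⟨k, comp⟩ := C
  obtain ⟨hv, hc⟩ := h
  have hd : G.dist v₀ v = k := hv
  subst hd
  exact Sigma.ext rfl (heq_of_eq hc)

lemma clusterOf_level (v : V) : (clusterOf G v₀ v).1 = G.dist v₀ v := rfl

/-- dist to adjacent vertices differs by at most one. -/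
lemma dist_le_adj (hconn : G.Connected) {u v : V} (h : G.Adj u v) :
    G.dist v₀ v ≤ G.dist v₀ u + 1 := by
  calc G.dist v₀ v ≤ G.dist v₀ u + G.dist u v := hconn.dist_triangle
    _ ≤ G.dist v₀ u + 1 := by
        have : G.dist u v = 1 := SimpleGraph.dist_eq_one_iff_adj.mpr h
        omega

/-- every vertex at positive distance has a predecessor -/
lemma exists_pred (hconn : G.Connected) {v : V} (h : 1 ≤ G.dist v₀ v) :
    ∃ u, u ∈ predSet G v₀ v := by
  obtain ⟨p, hp⟩ := hconn.exists_walk_length_eq_dist v₀ v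
  cases hrev : p.reverse with
  | nil =>
      exfalso
      have : p = SimpleGraph.Walk.nil.reverse := by
        rw [← hrev, SimpleGraph.Walk.reverse_reverse]
      subst this
      simp at hp; simp [SimpleGraph.dist_self] at h
  | cons hadj q =>
      rename_i u
      refine ⟨u, hadj.symm, ?_⟩
      have h1 : G.dist v₀ u ≤ G.dist v₀ v - 1 := by
        have hq : G.dist v₀ u ≤ q.reverse.length := SimpleGraph.dist_le _
        have : p.length = q.length + 1 := by
          rw [← p.reverse_reverse, hrev]; simp
        simp at hq; omega
      have h2 : G.dist v₀ v ≤ G.dist v₀ u + 1 := dist_le_adj hconn hadj.symm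
      omega

lemma pred_dist {v u : V} (hu : u ∈ predSet G v₀ v) :
    G.dist v₀ u = G.dist v₀ v - 1 := hu.2

/-- transfer: reachability in a sphere gives equality of clusters -/
lemma clusterOf_eq_of_reachable {u u' : V} {k : ℕ} (hu : G.dist v₀ u = k) (hu' : G.dist v₀ u' = k)
    (h : (G.induce (sphere G v₀ k)).Reachable ⟨u, hu⟩ ⟨u', hu'⟩) :
    clusterOf G v₀ u = clusterOf G v₀ u' := by
  subst hu
  exact (clusterOf_eq_of_mem
    ⟨hu', SimpleGraph.ConnectedComponent.sound h.symm⟩).symm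

/-- two predecessors of the same vertex lie in the same cluster -/
lemma pred_same_cluster (hW : IsWeetman G) {v u u' : V}
    (hu : u ∈ predSet G v₀ v) (hu' : u' ∈ predSet G v₀ v) :
    clusterOf G v₀ u = clusterOf G v₀ u' := by
  have hpre := (hW v₀).2 v
  have hr : (G.induce (predSet G v₀ v)).Reachable ⟨u, hu⟩ ⟨u', hu'⟩ := hpre _ _
  have hsub : predSet G v₀ v ⊆ sphere G v₀ (G.dist v₀ v - 1) := fun x hx => hx.2
  exact clusterOf_eq_of_reachable hu.2 hu'.2 (hr.map (G.induceHomOfLE hsub).toHom)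
end Aux

section Aux2
variable {V : Type*} {G : SimpleGraph V} {v₀ : V}

/-- predecessors of vertices joined by a walk inside a sphere lie in the same cluster -/
lemma pred_cluster_eq_of_walk (hW : IsWeetman G) {k : ℕ} {x y : ↥(sphere G v₀ k)}
    (w : (G.induce (sphere G v₀ k)).Walk x y) :
    ∀ u u' : V, u ∈ predSet G v₀ x.1 → u' ∈ predSet G v₀ y.1 →
    clusterOf G v₀ u = clusterOf G v₀ u' := by
  induction w with
  | nil =>
      intro u u' hu hu'
      exact pred_same_cluster hW hu hu'
  | cons h p ih =>
      rename_i a b c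
      intro u u' hu hu'
      have ha : G.dist v₀ a.1 = k := a.2
      have hb : G.dist v₀ b.1 = k := b.2
      obtain ⟨t, ht1, ht2, ht3⟩ := (hW v₀).1 a.1 b.1 h (by rw [ha, hb])
      have hta : t ∈ predSet G v₀ a.1 := ⟨ht1, ht3⟩
      have htb : t ∈ predSet G v₀ b.1 := ⟨ht2, by rw [ht3, ha, hb]⟩
      calc clusterOf G v₀ u = clusterOf G v₀ t := pred_same_cluster hW hu hta
        _ = clusterOf G v₀ u' := ih t u' htb hu'

/-- predecessors of vertices in the same cluster lie in the same cluster -/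
lemma pred_cluster_eq (hW : IsWeetman G) {v v' : V}
    (hc : clusterOf G v₀ v = clusterOf G v₀ v')
    {u u' : V} (hu : u ∈ predSet G v₀ v) (hu' : u' ∈ predSet G v₀ v') :
    clusterOf G v₀ u = clusterOf G v₀ u' := by
  have hm : memCluster G v₀ v' (clusterOf G v₀ v) := hc ▸ mem_clusterOf v'
  obtain ⟨hv', hcomp⟩ := hm
  obtain ⟨wk⟩ := SimpleGraph.ConnectedComponent.exact hcomp
  exact (pred_cluster_eq_of_walk hW wk u' u hu' hu).symm

/-- every walk from a vertex to the base passes through the ancestor cluster -/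
lemma walk_to_base (hconn : G.Connected) (hW : IsWeetman G) :
    ∀ n : ℕ, ∀ v : V, 1 ≤ G.dist v₀ v →
    ∀ p : G.Walk v v₀, p.length ≤ n → ∀ u ∈ predSet G v₀ v,
    ∃ w ∈ p.support, clusterOf G v₀ w = clusterOf G v₀ u := by
  classical
  intro n
  induction n with
  | zero =>
      intro v hv p hp u hu
      cases p with
      | nil => simp [SimpleGraph.dist_self] at hv
      | cons h q => simp at hp
  | succ n ih =>
      intro v hv p hp u hu
      cases p with
      | nil => simp [SimpleGraph.dist_self] at hv
      | cons hadj q =>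
        rename_i v₁
        have hq : q.length ≤ n := by
          simp only [SimpleGraph.Walk.length_cons] at hp; omega
        have h1 : G.dist v₀ v₁ ≤ G.dist v₀ v + 1 := dist_le_adj hconn hadj
        have h2 : G.dist v₀ v ≤ G.dist v₀ v₁ + 1 := dist_le_adj hconn hadj.symm
        rcases Nat.lt_trichotomy (G.dist v₀ v₁) (G.dist v₀ v) with hlt | heq | hgt
        · have hv₁ : v₁ ∈ predSet G v₀ v := ⟨hadj.symm, by omega⟩
          exact ⟨v₁, by simp, pred_same_cluster hW hv₁ hu⟩
        · obtain ⟨u', hu'⟩ := exists_pred hconn (by omega : 1 ≤ G.dist v₀ v₁)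
          obtain ⟨w, hw1, hw2⟩ := ih v₁ (by omega) q hq u' hu'
          refine ⟨w, by simp [hw1], ?_⟩
          rw [hw2]
          have hys : v ∈ sphere G v₀ (G.dist v₀ v₁) := heq.symm
          have hadj' : (G.induce (sphere G v₀ (G.dist v₀ v₁))).Adj
              (⟨v₁, rfl⟩ : ↥(sphere G v₀ (G.dist v₀ v₁))) ⟨v, hys⟩ := hadj.symm
          exact pred_cluster_eq_of_walk hW hadj'.toWalk u' u hu' hu
        · have hvp : v ∈ predSet G v₀ v₁ := ⟨hadj, by omega⟩
          obtain ⟨w, hw1, hw2⟩ := ih v₁ (by omega) q hq v hvp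
          have hdw : G.dist v₀ w = G.dist v₀ v := congrArg Sigma.fst hw2
          obtain ⟨u'', hu''⟩ := exists_pred hconn (by omega : 1 ≤ G.dist v₀ w)
          obtain ⟨w', hw'1, hw'2⟩ := ih w (by omega) (q.dropUntil w hw1)
            (le_trans (q.length_dropUntil_le hw1) hq) u'' hu''
          refine ⟨w', ?_, ?_⟩
          · have := q.support_dropUntil_subset hw1 hw'1
            simp [this]
          · rw [hw'2]
            exact pred_cluster_eq hW hw2 hu'' hu
end Aux2

/-- In a Weetman graph, every cluster at level `k ≥ 1` has a unique neighboring cluster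
at level `k - 1` (its ancestor), and every walk from `v₀` to a vertex of the cluster
passes through a vertex of this ancestor. -/
theorem stmt15 {V : Type*} [Fintype V] (G : SimpleGraph V) (v₀ : V)
    (hconn : G.Connected) (hW : IsWeetman G) :
    ∀ C : Cluster G v₀, 1 ≤ C.1 →
      (∃! C' : Cluster G v₀, C'.1 + 1 = C.1 ∧ (clusterGraph G v₀).Adj C' C) ∧
      (∀ C' : Cluster G v₀, C'.1 + 1 = C.1 → (clusterGraph G v₀).Adj C' C →
        ∀ v : V, memCluster G v₀ v C → ∀ p : G.Walk v₀ v,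
          ∃ w : V, memCluster G v₀ w C' ∧ w ∈ p.support) := by
  intro C hC
  obtain ⟨x, hx⟩ := Quot.exists_rep C.2
  have hxmem : memCluster G v₀ x.1 C := ⟨x.2, hx⟩
  have hdx : G.dist v₀ x.1 = C.1 := x.2
  obtain ⟨u0, hu0⟩ := exists_pred hconn (by omega : 1 ≤ G.dist v₀ x.1)
  set A := clusterOf G v₀ u0 with hA
  have hlevA : A.1 + 1 = C.1 := by
    have : A.1 = G.dist v₀ u0 := rfl
    rw [this, hu0.2]; omega
  have hadjA : (clusterGraph G v₀).Adj A C := by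
    refine ⟨?_, u0, x.1, hu0.1, mem_clusterOf u0, hxmem⟩
    intro h
    have := congrArg Sigma.fst h
    omega
  -- key: any cluster at level k-1 adjacent to C equals A
  have key : ∀ C' : Cluster G v₀, C'.1 + 1 = C.1 → (clusterGraph G v₀).Adj C' C → C' = A := by
    rintro C' hlev ⟨hne, a, b, hab, haC', hbC⟩
    have hda : G.dist v₀ a = C'.1 := haC'.1
    have hdb : G.dist v₀ b = C.1 := hbC.1
    have hab' : a ∈ predSet G v₀ b := ⟨hab, by omega⟩
    have hcb : clusterOf G v₀ b = clusterOf G v₀ x.1 := by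
      rw [clusterOf_eq_of_mem hbC, clusterOf_eq_of_mem hxmem]
    have : clusterOf G v₀ a = A := pred_cluster_eq hW hcb hab' hu0
    rw [← clusterOf_eq_of_mem haC', this]
  constructor
  · exact ⟨A, ⟨hlevA, hadjA⟩, fun C' h => key C' h.1 h.2⟩
  · intro C' hlev hadj v hv p
    have hdv : G.dist v₀ v = C.1 := hv.1
    obtain ⟨u, hu⟩ := exists_pred hconn (by omega : 1 ≤ G.dist v₀ v)
    have hcv : clusterOf G v₀ v = clusterOf G v₀ x.1 := by
      rw [clusterOf_eq_of_mem hv, clusterOf_eq_of_mem hxmem]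
    have hcu : clusterOf G v₀ u = C' := by
      rw [pred_cluster_eq hW hcv hu hu0, ← hA, key C' hlev hadj]
    obtain ⟨w, hw1, hw2⟩ := walk_to_base hconn hW p.reverse.length v (by omega)
      p.reverse le_rfl u hu
    refine ⟨w, ?_, ?_⟩
    · rw [← hcu, ← hw2]; exact mem_clusterOf w
    · rw [SimpleGraph.Walk.support_reverse] at hw1
      exact List.mem_reverse.mp hw1
end

section
/- In a connected graph G with base vertex v₀ in which the clusters form a tree, for every vertex v at distance k≥1 from v₀, all shortest paths from v₀ to v intersect every cluster on the unique cluster-tree path from the cluster of v₀ to the cluster of v. -/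
lemma memCluster_clusterOf {V : Type*} (G : SimpleGraph V) (v₀ v : V) :
    memCluster G v₀ v (clusterOf G v₀ v) := ⟨rfl, rfl⟩

/-- Key induction: a geodesic walk projects to a walk in the cluster graph. -/
lemma exists_cluster_walk {V : Type*} (G : SimpleGraph V) (v₀ : V) (hconn : G.Connected)
    : ∀ {a v : V} (p : G.Walk a v), G.dist v₀ a + p.length = G.dist v₀ v →
    ∃ Q : (clusterGraph G v₀).Walk (clusterOf G v₀ a) (clusterOf G v₀ v),
      ∀ C ∈ Q.support, ∃ w ∈ p.support, memCluster G v₀ w C := by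
  intro a v p
  induction p with
  | @nil b =>
    intro _
    exact ⟨SimpleGraph.Walk.nil, by
      intro C hC
      simp only [SimpleGraph.Walk.support_nil, List.mem_singleton] at hC
      exact ⟨b, by simp, hC ▸ memCluster_clusterOf G v₀ b⟩⟩
  | @cons a c b h p' ih =>
    intro hlen
    simp only [SimpleGraph.Walk.length_cons] at hlen
    have hdcv : G.dist c b ≤ p'.length := SimpleGraph.dist_le p'
    have h1 : G.dist v₀ c ≤ G.dist v₀ a + 1 := by
      calc G.dist v₀ c ≤ G.dist v₀ a + G.dist a c := hconn.dist_triangle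
        _ ≤ G.dist v₀ a + 1 := by
            have := SimpleGraph.dist_le h.toWalk
            simp only [SimpleGraph.Adj.toWalk, SimpleGraph.Walk.length_cons,
              SimpleGraph.Walk.length_nil] at this
            omega
    have h2 : G.dist v₀ a + 1 ≤ G.dist v₀ c := by
      have := hconn.dist_triangle (u := v₀) (v := c) (w := b)
      omega
    have hdc : G.dist v₀ c = G.dist v₀ a + 1 := le_antisymm h1 h2
    obtain ⟨Q', hQ'⟩ := ih (by omega)
    have hne : clusterOf G v₀ a ≠ clusterOf G v₀ c := by
      intro he
      have : G.dist v₀ a = G.dist v₀ c := congrArg Sigma.fst he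
      omega
    have hadj : (clusterGraph G v₀).Adj (clusterOf G v₀ a) (clusterOf G v₀ c) :=
      ⟨hne, a, c, h, memCluster_clusterOf G v₀ a, memCluster_clusterOf G v₀ c⟩
    refine ⟨SimpleGraph.Walk.cons hadj Q', ?_⟩
    intro C hC
    simp only [SimpleGraph.Walk.support_cons, List.mem_cons] at hC
    rcases hC with rfl | hC
    · exact ⟨a, by simp, memCluster_clusterOf G v₀ a⟩
    · obtain ⟨w, hw, hwC⟩ := hQ' C hC
      exact ⟨w, by simp [hw], hwC⟩

/-- If the clusters form a tree, every shortest path from `v₀` to `v` meets every cluster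
on the (unique) cluster-tree path from the cluster of `v₀` to the cluster of `v`. -/
theorem stmt17 {V : Type*} (G : SimpleGraph V) (v₀ : V) (hconn : G.Connected)
    (htree : (clusterGraph G v₀).IsTree) :
    ∀ (v : V) (k : ℕ), G.dist v₀ v = k → 1 ≤ k →
      ∀ p : G.Walk v₀ v, p.length = k →
        ∀ q : (clusterGraph G v₀).Walk (clusterOf G v₀ v₀) (clusterOf G v₀ v),
          q.IsPath → ∀ C ∈ q.support, ∃ w ∈ p.support, memCluster G v₀ w C := by
  classical
  intro v k hdist hk p hp q hq C hC
  obtain ⟨Q, hQ⟩ := exists_cluster_walk G v₀ hconn p (by simp [hp, hdist])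
  have huniq := htree.existsUnique_path (clusterOf G v₀ v₀) (clusterOf G v₀ v)
  have : q = Q.bypass := (huniq.unique hq Q.bypass_isPath)
  exact hQ C (Q.support_bypass_subset (this ▸ hC))
end
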